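/- A dense set of rooted triplets R over a leaf set V is consistent (i.e., there is a rooted binary tree over V with which every triplet of R is consistent) if and only if R contains no conflict on four leaves. -/

import Mathlib

/-- Rooted binary trees with leaves labelled by `V`. -/
inductive RTree (V : Type*) : Type _ where
  | leaf : V → RTree V
  | node : RTree V → RTree V → RTree V

namespace RTree

variable {V : Type*} [DecidableEq V]

/-- The list of leaf labels of a tree, from left to right. -/
def leafList : RTree V → List V
  | .leaf x => [x]
  | .node l r => l.leafList ++ r.leafList

/-- The set of leaf labels of a tree. -/
def leaves (t : RTree V) : Finset V := t.leafList.toFinset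

/-- A tree is proper when all its leaf labels are distinct. -/
def Proper (t : RTree V) : Prop := t.leafList.Nodup

/-- `Consistent T a b c` means that the rooted triplet `ab|c` is consistent
with `T`, i.e. the restriction of `T` to `{a, b, c}` is homeomorphic to the
rooted binary tree in which `a` and `b` are siblings below one child of the
root, the other child being `c`. -/
def Consistent : RTree V → V → V → V → Prop
  | .leaf _, _, _, _ => False
  | .node l r, a, b, c =>
      (a ∈ l.leaves ∧ b ∈ l.leaves ∧ c ∈ l.leaves ∧ Consistent l a b c) ∨
      (a ∈ r.leaves ∧ b ∈ r.leaves ∧ c ∈ r.leaves ∧ Consistent r a b c) ∨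
      (a ∈ l.leaves ∧ b ∈ l.leaves ∧ c ∈ r.leaves) ∨
      (a ∈ r.leaves ∧ b ∈ r.leaves ∧ c ∈ l.leaves)

end RTree

namespace RTree

variable {V : Type*} [DecidableEq V]

@[simp] lemma leaves_leaf (x : V) : (leaf x).leaves = {x} := rfl

@[simp] lemma leaves_node (l r : RTree V) : (node l r).leaves = l.leaves ∪ r.leaves := by
  simp [leaves, leafList]

lemma mem_leaves_iff {t : RTree V} {y : V} : y ∈ t.leaves ↔ y ∈ t.leafList :=
  List.mem_toFinset

lemma leaves_nonempty (t : RTree V) : t.leaves.Nonempty := by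
  induction t with
  | leaf x => exact ⟨x, by simp⟩
  | node l r ihl ihr => exact ⟨ihl.choose, by simp [ihl.choose_spec]⟩

lemma proper_node {l r : RTree V} (h : (node l r).Proper) :
    l.Proper ∧ r.Proper ∧ ∀ {y : V}, y ∈ l.leaves → y ∈ r.leaves → False := by
  have h' := h
  rw [Proper, leafList, List.nodup_append] at h'
  exact ⟨h'.1, h'.2.1, fun hy hy' => h'.2.2 _ (by simpa [leaves] using hy) _ (by simpa [leaves] using hy') rfl⟩

lemma consistent_mem {t : RTree V} {a b c : V} (h : Consistent t a b c) :
    a ∈ t.leaves ∧ b ∈ t.leaves ∧ c ∈ t.leaves := by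
  induction t with
  | leaf x => exact h.elim
  | node l r ihl ihr =>
    rcases h with ⟨h1, h2, h3, _⟩ | ⟨h1, h2, h3, _⟩ | ⟨h1, h2, h3⟩ | ⟨h1, h2, h3⟩ <;>
      simp [h1, h2, h3]

lemma consistent_symm {t : RTree V} {a b c : V} (h : Consistent t a b c) :
    Consistent t b a c := by
  induction t with
  | leaf x => exact h.elim
  | node l r ihl ihr =>
    rcases h with ⟨h1, h2, h3, h4⟩ | ⟨h1, h2, h3, h4⟩ | ⟨h1, h2, h3⟩ | ⟨h1, h2, h3⟩
    · exact Or.inl ⟨h2, h1, h3, ihl h4⟩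
    · exact Or.inr (Or.inl ⟨h2, h1, h3, ihr h4⟩)
    · exact Or.inr (Or.inr (Or.inl ⟨h2, h1, h3⟩))
    · exact Or.inr (Or.inr (Or.inr ⟨h2, h1, h3⟩))

lemma consistent_excl1 {t : RTree V} {a b c : V} (hp : t.Proper)
    (h1 : Consistent t a b c) (h2 : Consistent t a c b) : False := by
  induction t with
  | leaf x => exact h1.elim
  | node l r ihl ihr =>
    obtain ⟨hl, hr, hD⟩ := proper_node hp
    rcases h1 with ⟨a1, b1, c1, h1⟩ | ⟨a1, b1, c1, h1⟩ | ⟨a1, b1, c1⟩ | ⟨a1, b1, c1⟩ <;>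
      rcases h2 with ⟨a2, c2, b2, h2⟩ | ⟨a2, c2, b2, h2⟩ | ⟨a2, c2, b2⟩ | ⟨a2, c2, b2⟩ <;>
      first
        | exact ihl hl h1 h2
        | exact ihr hr h1 h2
        | exact hD a1 a2
        | exact hD a2 a1
        | exact hD b1 b2
        | exact hD b2 b1
        | exact hD c1 c2
        | exact hD c2 c1

lemma consistent_excl2 {t : RTree V} {a b c : V} (hp : t.Proper)
    (h1 : Consistent t a b c) (h2 : Consistent t b c a) : False := by
  induction t with
  | leaf x => exact h1.elim
  | node l r ihl ihr =>
    obtain ⟨hl, hr, hD⟩ := proper_node hp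
    rcases h1 with ⟨a1, b1, c1, h1⟩ | ⟨a1, b1, c1, h1⟩ | ⟨a1, b1, c1⟩ | ⟨a1, b1, c1⟩ <;>
      rcases h2 with ⟨b2, c2, a2, h2⟩ | ⟨b2, c2, a2, h2⟩ | ⟨b2, c2, a2⟩ | ⟨b2, c2, a2⟩ <;>
      first
        | exact ihl hl h1 h2
        | exact ihr hr h1 h2
        | exact hD a1 a2
        | exact hD a2 a1
        | exact hD b1 b2
        | exact hD b2 b1
        | exact hD c1 c2
        | exact hD c2 c1

/-- ab|c and ac|d imply ab|d and bc|d. -/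
lemma consistent_trans2 {t : RTree V} {a b c d : V} (hp : t.Proper)
    (h1 : Consistent t a b c) (h2 : Consistent t a c d) :
    Consistent t a b d ∧ Consistent t b c d := by
  induction t with
  | leaf x => exact h1.elim
  | node l r ihl ihr =>
    obtain ⟨hl, hr, hD⟩ := proper_node hp
    rcases h1 with ⟨a1, b1, c1, h1⟩ | ⟨a1, b1, c1, h1⟩ | ⟨a1, b1, c1⟩ | ⟨a1, b1, c1⟩ <;>
      rcases h2 with ⟨a2, c2, d2, h2⟩ | ⟨a2, c2, d2, h2⟩ | ⟨a2, c2, d2⟩ | ⟨a2, c2, d2⟩ <;>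
      first
        | exact (hD a1 a2).elim
        | exact (hD a2 a1).elim
        | exact (hD c1 c2).elim
        | exact (hD c2 c1).elim
        | exact ⟨Or.inl ⟨a1, b1, d2, (ihl hl h1 h2).1⟩,
            Or.inl ⟨b1, c1, d2, (ihl hl h1 h2).2⟩⟩
        | exact ⟨Or.inr (Or.inl ⟨a1, b1, d2, (ihr hr h1 h2).1⟩),
            Or.inr (Or.inl ⟨b1, c1, d2, (ihr hr h1 h2).2⟩)⟩
        | exact ⟨Or.inr (Or.inr (Or.inl ⟨a1, b1, d2⟩)),
            Or.inr (Or.inr (Or.inl ⟨b1, c1, d2⟩))⟩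
        | exact ⟨Or.inr (Or.inr (Or.inr ⟨a1, b1, d2⟩)),
            Or.inr (Or.inr (Or.inr ⟨b1, c1, d2⟩))⟩

/-- ab|d and bc|d imply ac|d. -/
lemma consistent_trans4 {t : RTree V} {a b c d : V} (hp : t.Proper)
    (h1 : Consistent t a b d) (h2 : Consistent t b c d) :
    Consistent t a c d := by
  induction t with
  | leaf x => exact h1.elim
  | node l r ihl ihr =>
    obtain ⟨hl, hr, hD⟩ := proper_node hp
    rcases h1 with ⟨a1, b1, d1, h1⟩ | ⟨a1, b1, d1, h1⟩ | ⟨a1, b1, d1⟩ | ⟨a1, b1, d1⟩ <;>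
      rcases h2 with ⟨b2, c2, d2, h2⟩ | ⟨b2, c2, d2, h2⟩ | ⟨b2, c2, d2⟩ | ⟨b2, c2, d2⟩ <;>
      first
        | exact (hD b1 b2).elim
        | exact (hD b2 b1).elim
        | exact (hD d1 d2).elim
        | exact (hD d2 d1).elim
        | exact Or.inl ⟨a1, c2, d1, ihl hl h1 h2⟩
        | exact Or.inr (Or.inl ⟨a1, c2, d1, ihr hr h1 h2⟩)
        | exact Or.inr (Or.inr (Or.inl ⟨a1, c2, d1⟩))
        | exact Or.inr (Or.inr (Or.inr ⟨a1, c2, d1⟩))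

/-- pq|r and rs|p imply pq|s. -/
lemma consistent_trans6 {t : RTree V} {p q r s : V} (hp : t.Proper)
    (h1 : Consistent t p q r) (h2 : Consistent t r s p) :
    Consistent t p q s := by
  induction t with
  | leaf x => exact h1.elim
  | node l r' ihl ihr =>
    obtain ⟨hl, hr, hD⟩ := proper_node hp
    rcases h1 with ⟨p1, q1, r1, h1⟩ | ⟨p1, q1, r1, h1⟩ | ⟨p1, q1, r1⟩ | ⟨p1, q1, r1⟩ <;>
      rcases h2 with ⟨r2, s2, p2, h2⟩ | ⟨r2, s2, p2, h2⟩ | ⟨r2, s2, p2⟩ | ⟨r2, s2, p2⟩ <;>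
      first
        | exact (hD p1 p2).elim
        | exact (hD p2 p1).elim
        | exact (hD r1 r2).elim
        | exact (hD r2 r1).elim
        | exact Or.inl ⟨p1, q1, s2, ihl hl h1 h2⟩
        | exact Or.inr (Or.inl ⟨p1, q1, s2, ihr hr h1 h2⟩)
        | exact Or.inr (Or.inr (Or.inl ⟨p1, q1, s2⟩))
        | exact Or.inr (Or.inr (Or.inr ⟨p1, q1, s2⟩))


def restrictO : RTree V → Finset V → Option (RTree V)
  | .leaf x, S => if x ∈ S then some (.leaf x) else none
  | .node l r, S =>
    match restrictO l S, restrictO r S with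
    | some l', some r' => some (.node l' r')
    | some l', none => some l'
    | none, some r' => some r'
    | none, none => none

lemma restrictO_spec (t : RTree V) (S : Finset V) :
    (restrictO t S = none ∧ t.leafList.filter (· ∈ S) = []) ∨
    (∃ t', restrictO t S = some t' ∧ t'.leafList = t.leafList.filter (· ∈ S)) := by
  induction t with
  | leaf x =>
    by_cases hx : x ∈ S
    · exact Or.inr ⟨.leaf x, by simp [restrictO, hx], by simp [leafList, hx]⟩
    · exact Or.inl ⟨by simp [restrictO, hx], by simp [leafList, hx]⟩
  | node l r ihl ihr =>
    rcases ihl with ⟨hl, hl'⟩ | ⟨l', hl, hl'⟩ <;> rcases ihr with ⟨hr, hr'⟩ | ⟨r', hr, hr'⟩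
    · exact Or.inl ⟨by simp [restrictO, hl, hr], by simp [leafList, List.filter_append, hl', hr']⟩
    · exact Or.inr ⟨r', by simp [restrictO, hl, hr], by
        simp [leafList, List.filter_append, hl', hr']⟩
    · exact Or.inr ⟨l', by simp [restrictO, hl, hr], by
        simp [leafList, List.filter_append, hl', hr']⟩
    · exact Or.inr ⟨.node l' r', by simp [restrictO, hl, hr], by
        simp [leafList, List.filter_append, hl', hr']⟩

lemma leafList_of_restrictO {t t' : RTree V} {S : Finset V} (h : restrictO t S = some t') :
    t'.leafList = t.leafList.filter (· ∈ S) := by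
  rcases restrictO_spec t S with ⟨h1, _⟩ | ⟨t'', h1, h2⟩
  · simp [h1] at h
  · rw [h1] at h; cases h; exact h2

lemma leaves_of_restrictO {t t' : RTree V} {S : Finset V} (h : restrictO t S = some t') :
    t'.leaves = t.leaves ∩ S := by
  have := leafList_of_restrictO h
  ext y
  simp [leaves, this, List.mem_filter]

lemma proper_of_restrictO {t t' : RTree V} {S : Finset V} (h : restrictO t S = some t')
    (hp : t.Proper) : t'.Proper := by
  rw [Proper, leafList_of_restrictO h]
  exact hp.filter _

lemma mem_restrictO {t : RTree V} {S : Finset V} {a : V} (ha : a ∈ t.leaves) (haS : a ∈ S) :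
    ∃ t', restrictO t S = some t' ∧ a ∈ t'.leaves := by
  rcases restrictO_spec t S with ⟨h1, h2⟩ | ⟨t', h1, h2⟩
  · exfalso
    have : a ∈ t.leafList.filter (· ∈ S) := by
      rw [List.mem_filter]
      exact ⟨by simpa [leaves] using ha, by simpa using haS⟩
    rw [h2] at this; simp at this
  · exact ⟨t', h1, by
      rw [leaves_of_restrictO h1]
      exact Finset.mem_inter.2 ⟨ha, haS⟩⟩

lemma consistent_restrictO {t : RTree V} {S : Finset V} {a b c : V}
    (h : Consistent t a b c) (ha : a ∈ S) (hb : b ∈ S) (hc : c ∈ S) :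
    ∀ t', restrictO t S = some t' → Consistent t' a b c := by
  induction t with
  | leaf x => exact h.elim
  | node l r ihl ihr =>
    intro t' ht'
    have hmem : ∀ {u : RTree V} {u' : RTree V} {y : V}, restrictO u S = some u' →
        y ∈ u.leaves → y ∈ S → y ∈ u'.leaves := by
      intro u u' y hu hy hyS
      rw [leaves_of_restrictO hu]; exact Finset.mem_inter.2 ⟨hy, hyS⟩
    rcases h with ⟨h1, h2, h3, h4⟩ | ⟨h1, h2, h3, h4⟩ | ⟨h1, h2, h3⟩ | ⟨h1, h2, h3⟩
    · -- all in l
      obtain ⟨l', hl, hal⟩ := mem_restrictO h1 ha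
      rw [restrictO, hl] at ht'
      rcases hr : restrictO r S with _ | r' <;> rw [hr] at ht' <;> cases ht'
      · exact ihl h4 t' hl
      · exact Or.inl ⟨hmem hl h1 ha, hmem hl h2 hb, hmem hl h3 hc, ihl h4 l' hl⟩
    · obtain ⟨r', hrr, har⟩ := mem_restrictO h1 ha
      rw [restrictO, hrr] at ht'
      rcases hl : restrictO l S with _ | l' <;> rw [hl] at ht' <;> cases ht'
      · exact ihr h4 t' hrr
      · exact Or.inr (Or.inl ⟨hmem hrr h1 ha, hmem hrr h2 hb, hmem hrr h3 hc, ihr h4 r' hrr⟩)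
    · obtain ⟨l', hl, _⟩ := mem_restrictO h1 ha
      obtain ⟨r', hrr, _⟩ := mem_restrictO h3 hc
      rw [restrictO, hl, hrr] at ht'; cases ht'
      exact Or.inr (Or.inr (Or.inl ⟨hmem hl h1 ha, hmem hl h2 hb, hmem hrr h3 hc⟩))
    · obtain ⟨r', hrr, _⟩ := mem_restrictO h1 ha
      obtain ⟨l', hl, _⟩ := mem_restrictO h3 hc
      rw [restrictO, hl, hrr] at ht'; cases ht'
      exact Or.inr (Or.inr (Or.inr ⟨hmem hrr h1 ha, hmem hrr h2 hb, hmem hl h3 hc⟩))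


end RTree

variable {V : Type*} [DecidableEq V]

/-- A dense rooted-triplet instance is encoded by a map `R` assigning to each
`3`-subset `{a, b, c}` its chosen apex: `R {a, b, c} = c` means that the
triplet `ab|c` belongs to the instance. Validity requires the apex to belong
to the `3`-set. -/
def TripletValid (R : Finset V → V) (S : Finset V) : Prop :=
  ∀ a b c : V, a ∈ S → b ∈ S → c ∈ S → a ≠ b → a ≠ c → b ≠ c →
    R {a, b, c} ∈ ({a, b, c} : Finset V)

/-- `Realizes T R S`: every rooted triplet of the instance `R` on leaves of
`S` is consistent with the tree `T`. -/
def Realizes (T : RTree V) (R : Finset V → V) (S : Finset V) : Prop :=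
  ∀ a b c : V, a ∈ S → b ∈ S → c ∈ S → a ≠ b → a ≠ c → b ≠ c →
    R {a, b, c} = c → T.Consistent a b c

/-- The instance `R` restricted to `S` is consistent: some rooted binary tree
over `S` realizes all its triplets. -/
def TripletConsistentOn (R : Finset V → V) (S : Finset V) : Prop :=
  ∃ T : RTree V, T.Proper ∧ T.leaves = S ∧ Realizes T R S

section TripletAux

open RTree

variable {R : Finset V → V}

lemma tperm {a b c a' b' c' : V}
    (h : ∀ y : V, y = a ∨ y = b ∨ y = c ↔ y = a' ∨ y = b' ∨ y = c') :
    ({a, b, c} : Finset V) = {a', b', c'} := by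
  ext y; simpa using h y

lemma perm_swap12 (a b c : V) : ({a, b, c} : Finset V) = {b, a, c} :=
  Finset.insert_comm a b {c}

lemma perm_swap23 (a b c : V) : ({a, b, c} : Finset V) = {a, c, b} := by
  rw [Finset.pair_comm]

lemma perm_rot (a b c : V) : ({a, b, c} : Finset V) = {b, c, a} :=
  (perm_swap12 a b c).trans (perm_swap23 b a c)

lemma perm_rot2 (a b c : V) : ({a, b, c} : Finset V) = {c, a, b} :=
  (perm_swap23 a b c).trans (perm_swap12 a c b)

lemma perm_rev (a b c : V) : ({a, b, c} : Finset V) = {c, b, a} :=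
  (perm_rot a b c).trans (perm_swap12 b c a)

section Core

variable [Fintype V]
variable (hval : TripletValid R Finset.univ)
variable (H4 : ∀ C : Finset V, C.card = 4 → TripletConsistentOn R C)

include hval H4

lemma apex_mem (a b c : V) (hab : a ≠ b) (hac : a ≠ c) (hbc : b ≠ c) :
    R {a, b, c} = a ∨ R {a, b, c} = b ∨ R {a, b, c} = c := by
  have := hval a b c (Finset.mem_univ a) (Finset.mem_univ b) (Finset.mem_univ c) hab hac hbc
  simpa using this

lemma get4 {a b c d : V} (hab : a ≠ b) (hac : a ≠ c) (had : a ≠ d)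
    (hbc : b ≠ c) (hbd : b ≠ d) (hcd : c ≠ d) :
    ∃ T : RTree V, T.Proper ∧ Realizes T R {a, b, c, d} := by
  have h1 : c ∉ ({d} : Finset V) := by simp [hcd]
  have h2 : b ∉ ({c, d} : Finset V) := by simp [hbc, hbd]
  have h3 : a ∉ ({b, c, d} : Finset V) := by simp [hab, hac, had]
  have hcard : ({a, b, c, d} : Finset V).card = 4 := by
    rw [Finset.card_insert_of_notMem h3, Finset.card_insert_of_notMem h2,
      Finset.card_insert_of_notMem h1, Finset.card_singleton]
  obtain ⟨T, hp, _, hreal⟩ := H4 _ hcard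
  exact ⟨T, hp, hreal⟩

/-- From pq|x and qr|p infer that the apex of {p,r,x} is x. -/
lemma core1 {p q r x : V} (hpq : p ≠ q) (hpr : p ≠ r) (hqr : q ≠ r)
    (hpx : p ≠ x) (hqx : q ≠ x) (hrx : r ≠ x)
    (hx : R {p, q, x} = x) (hR : R {q, r, p} = p) : R {p, r, x} = x := by
  obtain ⟨T, hp, hreal⟩ := get4 hval H4 hpq hpr hpx hqr hqx hrx
  have mp : p ∈ ({p, q, r, x} : Finset V) := by simp
  have mq : q ∈ ({p, q, r, x} : Finset V) := by simp
  have mr : r ∈ ({p, q, r, x} : Finset V) := by simp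
  have mx : x ∈ ({p, q, r, x} : Finset V) := by simp
  have F1 : Consistent T p q x :=
    hreal p q x (mp) (mq) (mx) hpq hpx hqx hx
  have F2 : Consistent T q r p :=
    hreal q r p (mq) (mr) (mp) hqr hpq.symm hpr.symm hR
  obtain ⟨G1, G2⟩ := consistent_trans2 hp F2 (consistent_symm F1)
  -- G1 : q r x, G2 : r p x
  rcases apex_mem hval H4 p r x hpr hpx hrx with h | h | h
  · -- C r x p
    have : R {r, x, p} = p := by
      rw [show ({r, x, p} : Finset V) = {p, r, x} from perm_rot2 r x p]; exact h
    have F3 : Consistent T r x p :=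
      hreal r x p (mr) (mx) (mp) hrx hpr.symm hpx.symm this
    exact absurd F3 (fun F3 => consistent_excl1 hp G2 F3)
  · have : R {p, x, r} = r := by
      rw [show ({p, x, r} : Finset V) = {p, r, x} from perm_swap23 p x r]; exact h
    have F3 : Consistent T p x r :=
      hreal p x r (mp) (mx) (mr) hpx hpr hrx.symm this
    exact absurd F3 (fun F3 => consistent_excl1 hp (consistent_symm G2) F3)
  · exact h

/-- From pq|x and pr|q infer that the apex of {p,r,x} is x. -/
lemma core2 {p q r x : V} (hpq : p ≠ q) (hpr : p ≠ r) (hqr : q ≠ r)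
    (hpx : p ≠ x) (hqx : q ≠ x) (hrx : r ≠ x)
    (hx : R {p, q, x} = x) (hR : R {p, r, q} = q) : R {p, r, x} = x := by
  obtain ⟨T, hp, hreal⟩ := get4 hval H4 hpq hpr hpx hqr hqx hrx
  have mp : p ∈ ({p, q, r, x} : Finset V) := by simp
  have mq : q ∈ ({p, q, r, x} : Finset V) := by simp
  have mr : r ∈ ({p, q, r, x} : Finset V) := by simp
  have mx : x ∈ ({p, q, r, x} : Finset V) := by simp
  have F1 : Consistent T p q x :=
    hreal p q x (mp) (mq) (mx) hpq hpx hqx hx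
  have F2 : Consistent T p r q :=
    hreal p r q (mp) (mr) (mq) hpr hpq hqr.symm hR
  obtain ⟨G1, G2⟩ := consistent_trans2 hp F2 F1
  -- G1 : p r x, G2 : r q x
  rcases apex_mem hval H4 p r x hpr hpx hrx with h | h | h
  · have : R {r, x, p} = p := by
      rw [show ({r, x, p} : Finset V) = {p, r, x} from perm_rot2 r x p]; exact h
    have F3 : Consistent T r x p :=
      hreal r x p (mr) (mx) (mp) hrx hpr.symm hpx.symm this
    exact absurd F3 (fun F3 => consistent_excl1 hp (consistent_symm G1) F3)
  · have : R {p, x, r} = r := by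
      rw [show ({p, x, r} : Finset V) = {p, r, x} from perm_swap23 p x r]; exact h
    have F3 : Consistent T p x r :=
      hreal p x r (mp) (mx) (mr) hpx hpr hrx.symm this
    exact absurd F3 (fun F3 => consistent_excl1 hp G1 F3)
  · exact h

/-- From pq|s and qr|s infer pr|s (the apex of {p,r,s} is s). -/
lemma core3 {p q r s : V} (hpq : p ≠ q) (hpr : p ≠ r) (hqr : q ≠ r)
    (hps : p ≠ s) (hqs : q ≠ s) (hrs : r ≠ s)
    (h1 : R {p, q, s} = s) (h2 : R {q, r, s} = s) : R {p, r, s} = s := by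
  obtain ⟨T, hp, hreal⟩ := get4 hval H4 hpq hpr hps hqr hqs hrs
  have mp : p ∈ ({p, q, r, s} : Finset V) := by simp
  have mq : q ∈ ({p, q, r, s} : Finset V) := by simp
  have mr : r ∈ ({p, q, r, s} : Finset V) := by simp
  have ms : s ∈ ({p, q, r, s} : Finset V) := by simp
  have F1 : Consistent T p q s :=
    hreal p q s (mp) (mq) (ms) hpq hps hqs h1
  have F2 : Consistent T q r s :=
    hreal q r s (mq) (mr) (ms) hqr hqs hrs h2
  have G : Consistent T p r s := consistent_trans4 hp F1 F2
  rcases apex_mem hval H4 p r s hpr hps hrs with h | h | h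
  · have : R {r, s, p} = p := by
      rw [show ({r, s, p} : Finset V) = {p, r, s} from perm_rot2 r s p]; exact h
    have F3 : Consistent T r s p :=
      hreal r s p (mr) (ms) (mp) hrs hpr.symm hps.symm this
    exact absurd F3 (fun F3 => consistent_excl2 hp G F3)
  · have : R {p, s, r} = r := by
      rw [show ({p, s, r} : Finset V) = {p, r, s} from perm_swap23 p s r]; exact h
    have F3 : Consistent T p s r :=
      hreal p s r (mp) (ms) (mr) hps hpr hrs.symm this
    exact absurd F3 (fun F3 => consistent_excl1 hp G F3)
  · exact h

/-- From pq|r and rs|p infer pq|s (the apex of {p,q,s} is s). -/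
lemma core4 {p q r s : V} (hpq : p ≠ q) (hpr : p ≠ r) (hqr : q ≠ r)
    (hps : p ≠ s) (hqs : q ≠ s) (hrs : r ≠ s)
    (h1 : R {p, q, r} = r) (h2 : R {r, s, p} = p) : R {p, q, s} = s := by
  obtain ⟨T, hp, hreal⟩ := get4 hval H4 hpq hpr hps hqr hqs hrs
  have mp : p ∈ ({p, q, r, s} : Finset V) := by simp
  have mq : q ∈ ({p, q, r, s} : Finset V) := by simp
  have mr : r ∈ ({p, q, r, s} : Finset V) := by simp
  have ms : s ∈ ({p, q, r, s} : Finset V) := by simp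
  have F1 : Consistent T p q r :=
    hreal p q r (mp) (mq) (mr) hpq hpr hqr h1
  have F2 : Consistent T r s p :=
    hreal r s p (mr) (ms) (mp) hrs hpr.symm hps.symm h2
  have G : Consistent T p q s := consistent_trans6 hp F1 F2
  rcases apex_mem hval H4 p q s hpq hps hqs with h | h | h
  · have : R {q, s, p} = p := by
      rw [show ({q, s, p} : Finset V) = {p, q, s} from perm_rot2 q s p]; exact h
    have F3 : Consistent T q s p :=
      hreal q s p (mq) (ms) (mp) hqs hpq.symm hps.symm this
    exact absurd F3 (fun F3 => consistent_excl2 hp G F3)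
  · have : R {p, s, q} = q := by
      rw [show ({p, s, q} : Finset V) = {p, q, s} from perm_swap23 p s q]; exact h
    have F3 : Consistent T p s q :=
      hreal p s q (mp) (ms) (mq) hps hpq hqs.symm this
    exact absurd F3 (fun F3 => consistent_excl1 hp G F3)
  · exact h


variable (A B : Finset V)
variable (hdisj : ∀ y ∈ A, y ∉ B)
variable (hK : ∀ a b c : V, a ∈ A → b ∈ B → c ∈ A ∪ B → a ≠ b → a ≠ c → b ≠ c →
  R {a, b, c} ≠ c)

include hdisj hK hval in
lemma apexA {u v w : V} (hu : u ∈ A) (hv : v ∈ A) (hw : w ∈ B) (huv : u ≠ v) :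
    R {u, v, w} = w := by
  have huw : u ≠ w := fun h => hdisj u hu (h ▸ hw)
  have hvw : v ≠ w := fun h => hdisj v hv (h ▸ hw)
  rcases apex_mem hval H4 u v w huv huw hvw with h | h | h
  · exact absurd (by
      rw [show ({v, w, u} : Finset V) = {u, v, w} from perm_rot2 v w u]; exact h)
      (hK v w u hv hw (Finset.mem_union_left _ hu) hvw huv.symm huw.symm)
  · exact absurd (by
      rw [show ({u, w, v} : Finset V) = {u, v, w} from perm_swap23 u w v]; exact h)
      (hK u w v hu hw (Finset.mem_union_left _ hv) huw huv hvw.symm)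
  · exact h

include hdisj hK hval in
lemma apexB {u v w : V} (hu : u ∈ B) (hv : v ∈ B) (hw : w ∈ A) (huv : u ≠ v) :
    R {u, v, w} = w := by
  have huw : u ≠ w := fun h => hdisj w hw (h ▸ hu)
  have hvw : v ≠ w := fun h => hdisj w hw (h ▸ hv)
  rcases apex_mem hval H4 u v w huv huw hvw with h | h | h
  · exact absurd (by
      rw [show ({w, v, u} : Finset V) = {u, v, w} from perm_rev w v u]; exact h)
      (hK w v u hw hv (Finset.mem_union_right _ hu) hvw.symm huw.symm huv.symm)
  · exact absurd (by
      rw [show ({w, u, v} : Finset V) = {u, v, w} from perm_rot w u v]; exact h)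
      (hK w u v hw hu (Finset.mem_union_right _ hv) huw.symm hvw.symm huv)
  · exact h

include hdisj hK hval H4 in
lemma caseX (x : V) (hxA : x ∉ A) (hxB : x ∉ B)
    {a₀ b₀ : V} (ha₀ : a₀ ∈ A) (hb₀ : b₀ ∈ B)
    (hx : R {a₀, b₀, x} = x) :
    ∀ a b : V, a ∈ A ∪ B → b ∈ A ∪ B → a ≠ b → R {a, b, x} = x := by
  have hne : ∀ y ∈ A ∪ B, y ≠ x := by
    intro y hy h; subst h
    rcases Finset.mem_union.1 hy with h | h
    exacts [hxA h, hxB h]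
  have hDD : ∀ {u v : V}, u ∈ A → v ∈ B → u ≠ v := fun hu hv h => hdisj _ hu (h ▸ hv)
  have hab₀ : a₀ ≠ b₀ := hDD ha₀ hb₀
  have hmA : ∀ {y : V}, y ∈ A → y ∈ A ∪ B := fun h => Finset.mem_union_left _ h
  have hmB : ∀ {y : V}, y ∈ B → y ∈ A ∪ B := fun h => Finset.mem_union_right _ h
  have hα : ∀ b ∈ B, R {a₀, b, x} = x := by
    intro b hb
    by_cases hbb : b = b₀
    · subst hbb; exact hx
    · have hb₀b : b₀ ≠ b := Ne.symm hbb
      have hRa : R {b₀, b, a₀} = a₀ := apexB hval H4 A B hdisj hK hb₀ hb ha₀ hb₀b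
      exact core1 hval H4 hab₀ (hDD ha₀ hb) hb₀b (hne _ (hmA ha₀)) (hne _ (hmB hb₀))
        (hne _ (hmB hb)) hx hRa
  have hβ : ∀ a ∈ A, R {a, b₀, x} = x := by
    intro a ha
    by_cases haa : a = a₀
    · subst haa; exact hx
    · have hRb : R {a₀, a, b₀} = b₀ := apexA hval H4 A B hdisj hK ha₀ ha hb₀ (Ne.symm haa)
      have hx' : R {b₀, a₀, x} = x := by
        rw [show ({b₀, a₀, x} : Finset V) = {a₀, b₀, x} from perm_swap12 b₀ a₀ x]; exact hx
      have := core1 hval H4 hab₀.symm (hDD ha hb₀).symm (Ne.symm haa) (hne _ (hmB hb₀))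
        (hne _ (hmA ha₀)) (hne _ (hmA ha)) hx' hRb
      rw [show ({a, b₀, x} : Finset V) = {b₀, a, x} from perm_swap12 a b₀ x]; exact this
  have hγ : ∀ a ∈ A, ∀ b ∈ B, R {a, b, x} = x := by
    intro a ha b hb
    by_cases hbb : b = b₀
    · subst hbb; exact hβ a ha
    · have hRab : R {b₀, b, a} = a := apexB hval H4 A B hdisj hK hb₀ hb ha (Ne.symm hbb)
      exact core1 hval H4 (hDD ha hb₀) (hDD ha hb) (Ne.symm hbb) (hne _ (hmA ha))
        (hne _ (hmB hb₀)) (hne _ (hmB hb)) (hβ a ha) hRab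
  have hδ : ∀ a ∈ A, ∀ a' ∈ A, a ≠ a' → R {a, a', x} = x := by
    intro a ha a' ha' haa'
    have hK2 : R {a, a', b₀} = b₀ := apexA hval H4 A B hdisj hK ha ha' hb₀ haa'
    exact core2 hval H4 (hDD ha hb₀) haa' (hDD ha' hb₀).symm (hne _ (hmA ha))
      (hne _ (hmB hb₀)) (hne _ (hmA ha')) (hβ a ha) hK2
  have hε : ∀ b ∈ B, ∀ b' ∈ B, b ≠ b' → R {b, b', x} = x := by
    intro b hb b' hb' hbb'
    have hK2 : R {b, b', a₀} = a₀ := apexB hval H4 A B hdisj hK hb hb' ha₀ hbb'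
    have hx' : R {b, a₀, x} = x := by
      rw [show ({b, a₀, x} : Finset V) = {a₀, b, x} from perm_swap12 b a₀ x]
      exact hα b hb
    exact core2 hval H4 (hDD ha₀ hb).symm hbb' (hDD ha₀ hb') (hne _ (hmB hb))
      (hne _ (hmA ha₀)) (hne _ (hmB hb')) hx' hK2
  intro a b ha hb hab
  rcases Finset.mem_union.1 ha with h1 | h1 <;> rcases Finset.mem_union.1 hb with h2 | h2
  · exact hδ a h1 b h2 hab
  · exact hγ a h1 b h2
  · rw [show ({a, b, x} : Finset V) = {b, a, x} from perm_swap12 a b x]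
    exact hγ b h2 a h1
  · exact hε a h1 b h2 hab

include hdisj hK hval H4 in
lemma caseB (x : V) (hxA : x ∉ A) (hxB : x ∉ B)
    {a₀ b₀ : V} (ha₀ : a₀ ∈ A) (hb₀ : b₀ ∈ B)
    (hx : R {a₀, b₀, x} = b₀) :
    (∀ a ∈ A, ∀ b ∈ B, R {a, b, x} = b) ∧
      (∀ b ∈ B, ∀ b' ∈ B, b ≠ b' → R {b, b', x} = x) := by
  have hne : ∀ y ∈ A ∪ B, y ≠ x := by
    intro y hy h; subst h
    rcases Finset.mem_union.1 hy with h | h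
    exacts [hxA h, hxB h]
  have hDD : ∀ {u v : V}, u ∈ A → v ∈ B → u ≠ v := fun hu hv h => hdisj _ hu (h ▸ hv)
  have hab₀ : a₀ ≠ b₀ := hDD ha₀ hb₀
  have hmA : ∀ {y : V}, y ∈ A → y ∈ A ∪ B := fun h => Finset.mem_union_left _ h
  have hmB : ∀ {y : V}, y ∈ B → y ∈ A ∪ B := fun h => Finset.mem_union_right _ h
  have step1 : ∀ a ∈ A, R {a, b₀, x} = b₀ := by
    intro a ha
    by_cases haa : a = a₀
    · subst haa; exact hx
    · have hK2 : R {a, a₀, b₀} = b₀ := apexA hval H4 A B hdisj hK ha ha₀ hb₀ haa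
      have h2 : R {a₀, x, b₀} = b₀ := by
        rw [show ({a₀, x, b₀} : Finset V) = {a₀, b₀, x} from perm_swap23 a₀ x b₀]; exact hx
      have := core3 hval H4 haa (hne _ (hmA ha)) (hne _ (hmA ha₀))
        (hDD ha hb₀) hab₀ (hne _ (hmB hb₀)).symm hK2 h2
      rw [show ({a, b₀, x} : Finset V) = {a, x, b₀} from perm_swap23 a b₀ x]; exact this
  have hC2 : ∀ a ∈ A, ∀ b ∈ B, R {a, b, x} = b := by
    intro a ha b hb
    by_cases hbb : b = b₀
    · subst hbb; exact step1 a ha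
    · have hK2 : R {b, b₀, a} = a := apexB hval H4 A B hdisj hK hb hb₀ ha hbb
      have h1 : R {a, x, b₀} = b₀ := by
        rw [show ({a, x, b₀} : Finset V) = {a, b₀, x} from perm_swap23 a x b₀]
        exact step1 a ha
      have h2 : R {b₀, b, a} = a := by
        rw [show ({b₀, b, a} : Finset V) = {b, b₀, a} from perm_swap12 b₀ b a]; exact hK2
      -- core4 with p:=a, q:=x, r:=b₀, s:=b
      have := core4 hval H4 (hne _ (hmA ha)) (hDD ha hb₀) (hne _ (hmB hb₀)).symm
        (hDD ha hb) (hne _ (hmB hb)).symm (Ne.symm hbb) h1 h2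
      rw [show ({a, b, x} : Finset V) = {a, x, b} from perm_swap23 a b x]; exact this
  refine ⟨hC2, ?_⟩
  intro b hb b' hb' hbb'
  have hK2 : R {b, b', a₀} = a₀ := apexB hval H4 A B hdisj hK hb hb' ha₀ hbb'
  have h2 : R {a₀, x, b} = b := by
    rw [show ({a₀, x, b} : Finset V) = {a₀, b, x} from perm_swap23 a₀ x b]
    exact hC2 a₀ ha₀ b hb
  -- core4 with p:=b, q:=b', r:=a₀, s:=x
  exact core4 hval H4 hbb' (hDD ha₀ hb).symm (hDD ha₀ hb').symm (hne _ (hmB hb))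
    (hne _ (hmB hb')) (hne _ (hmA ha₀)) hK2 h2

set_option maxHeartbeats 8000000 in
include hval H4 in
lemma insert_leaf (x : V) :
    ∀ T' : RTree V, T'.Proper → x ∉ T'.leaves → Realizes T' R T'.leaves →
      ∃ T : RTree V, T.Proper ∧ T.leaves = insert x T'.leaves ∧
        Realizes T R (insert x T'.leaves) := by
  intro T'
  induction T' with
  | leaf a =>
    intro hp hx hreal
    have hax : x ≠ a := by simpa [leaves, leafList] using hx
    refine ⟨node (leaf a) (leaf x), ?_, ?_, ?_⟩
    · simp [Proper, leafList, Ne.symm hax]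
    · ext y; simp [leaves, leafList]; tauto
    · intro p q r hp' hq' hr' h1 h2 h3 _
      exfalso
      simp [leaves, leafList] at hp' hq' hr'
      rcases hp' with rfl | rfl <;> rcases hq' with rfl | rfl <;> rcases hr' with rfl | rfl <;>
        simp_all
  | node L Rt ihL ihRt =>
    intro hp hx hreal
    obtain ⟨hpL, hpRt, hD⟩ := proper_node hp
    have hlv : (node L Rt).leaves = L.leaves ∪ Rt.leaves := leaves_node L Rt
    have hxA : x ∉ L.leaves := fun h => hx (by rw [hlv]; exact Finset.mem_union_left _ h)
    have hxB : x ∉ Rt.leaves := fun h => hx (by rw [hlv]; exact Finset.mem_union_right _ h)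
    have hrealU : Realizes (node L Rt) R (L.leaves ∪ Rt.leaves) := by
      rw [hlv] at hreal; exact hreal
    have hxne : ∀ y ∈ L.leaves ∪ Rt.leaves, y ≠ x := by
      intro y hy h; subst h
      rcases Finset.mem_union.1 hy with h | h
      exacts [hxA h, hxB h]
    have hK : ∀ a b c : V, a ∈ L.leaves → b ∈ Rt.leaves → c ∈ L.leaves ∪ Rt.leaves →
        a ≠ b → a ≠ c → b ≠ c → R {a, b, c} ≠ c := by
      intro a b c ha hb hc h1 h2 h3 hEq
      have hcons := hrealU a b c (Finset.mem_union_left _ ha) (Finset.mem_union_right _ hb)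
        hc h1 h2 h3 hEq
      rcases hcons with ⟨m1, m2, m3, _⟩ | ⟨m1, m2, m3, _⟩ | ⟨m1, m2, m3⟩ | ⟨m1, m2, m3⟩
      exacts [hD m2 hb, hD ha m1, hD m2 hb, hD ha m1]
    have hrealL : Realizes L R L.leaves := by
      intro p q r hp' hq' hr' h1 h2 h3 hR
      have := hrealU p q r (Finset.mem_union_left _ hp') (Finset.mem_union_left _ hq')
        (Finset.mem_union_left _ hr') h1 h2 h3 hR
      rcases this with ⟨_, _, _, h⟩ | ⟨m1, _, _, _⟩ | ⟨_, _, m3⟩ | ⟨m1, _, _⟩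
      · exact h
      · exact (hD hp' m1).elim
      · exact (hD hr' m3).elim
      · exact (hD hp' m1).elim
    have hrealRt : Realizes Rt R Rt.leaves := by
      intro p q r hp' hq' hr' h1 h2 h3 hR
      have := hrealU p q r (Finset.mem_union_right _ hp') (Finset.mem_union_right _ hq')
        (Finset.mem_union_right _ hr') h1 h2 h3 hR
      rcases this with ⟨m1, _, _, _⟩ | ⟨_, _, _, h⟩ | ⟨m1, _, _⟩ | ⟨_, _, m3⟩
      · exact (hD m1 hp').elim
      · exact h
      · exact (hD m1 hp').elim
      · exact (hD m3 hr').elim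
    obtain ⟨a₀, ha₀⟩ := L.leaves_nonempty
    obtain ⟨b₀, hb₀⟩ := Rt.leaves_nonempty
    have hab₀ : a₀ ≠ b₀ := fun h => hD ha₀ (h ▸ hb₀)
    have ha₀x : a₀ ≠ x := hxne a₀ (Finset.mem_union_left _ ha₀)
    have hb₀x : b₀ ≠ x := hxne b₀ (Finset.mem_union_right _ hb₀)
    rcases apex_mem hval H4 a₀ b₀ x hab₀ ha₀x hb₀x with hA | hB | hX
    · -- R {a₀,b₀,x} = a₀ : insert x into the right subtree
      have hdisj' : ∀ y ∈ Rt.leaves, y ∉ L.leaves := fun y hy hy' => hD hy' hy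
      have hK' : ∀ a b c : V, a ∈ Rt.leaves → b ∈ L.leaves → c ∈ Rt.leaves ∪ L.leaves →
          a ≠ b → a ≠ c → b ≠ c → R {a, b, c} ≠ c := by
        intro a b c ha hb hc h1 h2 h3 hEq
        refine hK b a c hb ha (by rwa [Finset.union_comm]) h1.symm h3 h2 ?_
        rw [show ({b, a, c} : Finset V) = {a, b, c} from perm_swap12 b a c]
        exact hEq
      have hx' : R {b₀, a₀, x} = a₀ := by
        rw [show ({b₀, a₀, x} : Finset V) = {a₀, b₀, x} from perm_swap12 b₀ a₀ x]
        exact hA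
      obtain ⟨hC2, hC3⟩ := caseB hval H4 Rt.leaves L.leaves hdisj' hK' x hxB hxA hb₀ ha₀ hx'
      -- hC2 : ∀ b ∈ Rt.leaves, ∀ a ∈ L.leaves, R {b, a, x} = a
      -- hC3 : ∀ a ∈ L.leaves, ∀ a' ∈ L.leaves, a ≠ a' → R {a, a', x} = x
      obtain ⟨Rs, hpRs, hlvRs, hrealRs⟩ := ihRt hpRt hxB hrealRt
      have memRs : ∀ {y : V}, y ∈ Rt.leaves → y ∈ Rs.leaves := fun hy => by
        rw [hlvRs]; exact Finset.mem_insert_of_mem hy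
      have memxRs : x ∈ Rs.leaves := by rw [hlvRs]; exact Finset.mem_insert_self _ _
      refine ⟨node L Rs, ?_, ?_, ?_⟩
      · rw [Proper, leafList, List.nodup_append]
        refine ⟨hpL, hpRs, ?_⟩
        intro y hyl z hyr hyz
        subst hyz
        have hy2 : y ∈ Rs.leaves := mem_leaves_iff.2 hyr
        rw [hlvRs] at hy2
        rcases Finset.mem_insert.1 hy2 with rfl | hy2
        · exact hxA (mem_leaves_iff.2 hyl)
        · exact hD (mem_leaves_iff.2 hyl) hy2
      · rw [hlv, leaves_node, hlvRs, Finset.union_insert]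
      · rw [hlv]
        intro p q r hp' hq' hr' h1 h2 h3 hR
        rcases Finset.mem_insert.1 hp' with rfl | hpm
        · rcases Finset.mem_insert.1 hq' with rfl | hqm
          · exact absurd rfl h1
          rcases Finset.mem_insert.1 hr' with rfl | hrm
          · exact absurd rfl h2
          rcases Finset.mem_union.1 hqm with hq1 | hq1 <;> rcases Finset.mem_union.1 hrm with hr1 | hr1
          · -- q,r ∈ L : apex should be x, not r
            have e : R {p, q, r} = p := by
              rw [show ({p, q, r} : Finset V) = {q, r, p} from perm_rot p q r]
              exact hC3 q hq1 r hr1 h3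
            exact absurd (e.symm.trans hR) h2
          · -- q ∈ L, r ∈ Rt : hC2 r q gives apex q, contradiction with hR
            have e : R {p, q, r} = q := by
              rw [show ({p, q, r} : Finset V) = {r, q, p} from perm_rev p q r]
              exact hC2 r hr1 q hq1
            exact absurd (e.symm.trans hR) h3
          · -- q ∈ Rt, r ∈ L : hC2 q r gives apex r : consistent, x,q on right side
            exact Or.inr (Or.inr (Or.inr ⟨memxRs, memRs hq1, hr1⟩))
          · -- q,r ∈ Rt : recurse
            exact Or.inr (Or.inl ⟨memxRs, memRs hq1, memRs hr1,
              hrealRs p q r (Finset.mem_insert_self _ _) (Finset.mem_insert_of_mem hq1)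
                (Finset.mem_insert_of_mem hr1) h1 h2 h3 hR⟩)
        · rcases Finset.mem_insert.1 hq' with rfl | hqm
          · -- q = x
            rcases Finset.mem_insert.1 hr' with rfl | hrm
            · exact absurd rfl h3
            rcases Finset.mem_union.1 hpm with hp1 | hp1 <;>
              rcases Finset.mem_union.1 hrm with hr1 | hr1
            · have e : R {p, q, r} = q := by
                rw [show ({p, q, r} : Finset V) = {p, r, q} from perm_swap23 p q r]
                exact hC3 p hp1 r hr1 h2
              exact absurd (e.symm.trans hR) (hxne r (Finset.mem_union_left _ hr1)).symm
            · have e : R {p, q, r} = p := by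
                rw [show ({p, q, r} : Finset V) = {r, p, q} from perm_rot2 p q r]
                exact hC2 r hr1 p hp1
              exact absurd (e.symm.trans hR) h2
            · -- p ∈ Rt, r ∈ L : hC2 p r : apex r, consistent : p,x right
              exact Or.inr (Or.inr (Or.inr ⟨memRs hp1, memxRs, hr1⟩))
            · exact Or.inr (Or.inl ⟨memRs hp1, memxRs, memRs hr1,
                hrealRs p q r (Finset.mem_insert_of_mem hp1) (Finset.mem_insert_self _ _)
                  (Finset.mem_insert_of_mem hr1) h1 h2 h3 hR⟩)
          rcases Finset.mem_insert.1 hr' with rfl | hrm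
          · -- r = x
            rcases Finset.mem_union.1 hpm with hp1 | hp1 <;>
              rcases Finset.mem_union.1 hqm with hq1 | hq1
            · -- p,q ∈ L : apex x : d3 with x on the right
              exact Or.inr (Or.inr (Or.inl ⟨hp1, hq1, memxRs⟩))
            · -- p ∈ L, q ∈ Rt : hC2 q p : apex p ≠ x
              have e : R {p, q, r} = p := by
                rw [show ({p, q, r} : Finset V) = {q, p, r} from perm_swap12 p q r]
                exact hC2 q hq1 p hp1
              exact absurd (e.symm.trans hR) (hxne p (Finset.mem_union_left _ hp1))
            · have e : R {p, q, r} = q := hC2 p hp1 q hq1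
              exact absurd (e.symm.trans hR) (hxne q (Finset.mem_union_left _ hq1))
            · exact Or.inr (Or.inl ⟨memRs hp1, memRs hq1, memxRs,
                hrealRs p q r (Finset.mem_insert_of_mem hp1) (Finset.mem_insert_of_mem hq1)
                  (Finset.mem_insert_self _ _) h1 h2 h3 hR⟩)
          · -- p,q,r all in L ∪ Rt
            rcases Finset.mem_union.1 hpm with hp1 | hp1 <;>
              rcases Finset.mem_union.1 hqm with hq1 | hq1 <;>
              rcases Finset.mem_union.1 hrm with hr1 | hr1
            · exact Or.inl ⟨hp1, hq1, hr1, hrealL p q r hp1 hq1 hr1 h1 h2 h3 hR⟩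
            · exact Or.inr (Or.inr (Or.inl ⟨hp1, hq1, memRs hr1⟩))
            · exact absurd hR (hK p q r hp1 hq1 (Finset.mem_union_left _ hr1) h1 h2 h3)
            · exact absurd hR (hK p q r hp1 hq1 (Finset.mem_union_right _ hr1) h1 h2 h3)
            · have e : R {q, p, r} = R {p, q, r} := by
                rw [show ({q, p, r} : Finset V) = {p, q, r} from perm_swap12 q p r]
              exact absurd (e.trans hR)
                (hK q p r hq1 hp1 (Finset.mem_union_left _ hr1) h1.symm h3 h2)
            · have e : R {q, p, r} = R {p, q, r} := by
                rw [show ({q, p, r} : Finset V) = {p, q, r} from perm_swap12 q p r]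
              exact absurd (e.trans hR)
                (hK q p r hq1 hp1 (Finset.mem_union_right _ hr1) h1.symm h3 h2)
            · exact Or.inr (Or.inr (Or.inr ⟨memRs hp1, memRs hq1, hr1⟩))
            · exact Or.inr (Or.inl ⟨memRs hp1, memRs hq1, memRs hr1,
                hrealRs p q r (Finset.mem_insert_of_mem hp1) (Finset.mem_insert_of_mem hq1)
                  (Finset.mem_insert_of_mem hr1) h1 h2 h3 hR⟩)
    · -- R {a₀,b₀,x} = b₀ : insert x into the left subtree
      obtain ⟨hC2, hC3⟩ := caseB hval H4 L.leaves Rt.leaves (fun y hy hy' => hD hy hy') hK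
        x hxA hxB ha₀ hb₀ hB
      -- hC2 : ∀ a ∈ L.leaves, ∀ b ∈ Rt.leaves, R {a, b, x} = b
      -- hC3 : ∀ b ∈ Rt.leaves, ∀ b' ∈ Rt.leaves, b ≠ b' → R {b, b', x} = x
      obtain ⟨Ls, hpLs, hlvLs, hrealLs⟩ := ihL hpL hxA hrealL
      have memLs : ∀ {y : V}, y ∈ L.leaves → y ∈ Ls.leaves := fun hy => by
        rw [hlvLs]; exact Finset.mem_insert_of_mem hy
      have memxLs : x ∈ Ls.leaves := by rw [hlvLs]; exact Finset.mem_insert_self _ _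
      refine ⟨node Ls Rt, ?_, ?_, ?_⟩
      · rw [Proper, leafList, List.nodup_append]
        refine ⟨hpLs, hpRt, ?_⟩
        intro y hyl z hyr hyz
        subst hyz
        have hy2 : y ∈ Ls.leaves := mem_leaves_iff.2 hyl
        rw [hlvLs] at hy2
        rcases Finset.mem_insert.1 hy2 with rfl | hy2
        · exact hxB (mem_leaves_iff.2 hyr)
        · exact hD hy2 (mem_leaves_iff.2 hyr)
      · rw [hlv, leaves_node, hlvLs, Finset.insert_union]
      · rw [hlv]
        intro p q r hp' hq' hr' h1 h2 h3 hR
        rcases Finset.mem_insert.1 hp' with rfl | hpm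
        · rcases Finset.mem_insert.1 hq' with rfl | hqm
          · exact absurd rfl h1
          rcases Finset.mem_insert.1 hr' with rfl | hrm
          · exact absurd rfl h2
          rcases Finset.mem_union.1 hqm with hq1 | hq1 <;> rcases Finset.mem_union.1 hrm with hr1 | hr1
          · -- q,r ∈ L : recurse
            exact Or.inl ⟨memxLs, memLs hq1, memLs hr1,
              hrealLs p q r (Finset.mem_insert_self _ _) (Finset.mem_insert_of_mem hq1)
                (Finset.mem_insert_of_mem hr1) h1 h2 h3 hR⟩
          · -- q ∈ L, r ∈ Rt : hC2 q r : apex r : consistent, x,q ∈ Ls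
            exact Or.inr (Or.inr (Or.inl ⟨memxLs, memLs hq1, hr1⟩))
          · -- q ∈ Rt, r ∈ L : hC2 r q : apex q ≠ r
            have e : R {p, q, r} = q := by
              rw [show ({p, q, r} : Finset V) = {r, q, p} from perm_rev p q r]
              exact hC2 r hr1 q hq1
            exact absurd (e.symm.trans hR) h3
          · -- q,r ∈ Rt : hC3 : apex x ≠ r
            have e : R {p, q, r} = p := by
              rw [show ({p, q, r} : Finset V) = {q, r, p} from perm_rot p q r]
              exact hC3 q hq1 r hr1 h3
            exact absurd (e.symm.trans hR) h2
        · rcases Finset.mem_insert.1 hq' with rfl | hqm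
          · rcases Finset.mem_insert.1 hr' with rfl | hrm
            · exact absurd rfl h3
            rcases Finset.mem_union.1 hpm with hp1 | hp1 <;>
              rcases Finset.mem_union.1 hrm with hr1 | hr1
            · exact Or.inl ⟨memLs hp1, memxLs, memLs hr1,
                hrealLs p q r (Finset.mem_insert_of_mem hp1) (Finset.mem_insert_self _ _)
                  (Finset.mem_insert_of_mem hr1) h1 h2 h3 hR⟩
            · -- p ∈ L, r ∈ Rt : hC2 p r : apex r : consistent : p,x ∈ Ls
              exact Or.inr (Or.inr (Or.inl ⟨memLs hp1, memxLs, hr1⟩))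
            · -- p ∈ Rt, r ∈ L : hC2 r p : apex p ≠ r
              have e : R {p, q, r} = p := by
                rw [show ({p, q, r} : Finset V) = {r, p, q} from perm_rot2 p q r]
                exact hC2 r hr1 p hp1
              exact absurd (e.symm.trans hR) h2
            · -- p,r ∈ Rt : hC3 p r : apex x ≠ r
              have e : R {p, q, r} = q := by
                rw [show ({p, q, r} : Finset V) = {p, r, q} from perm_swap23 p q r]
                exact hC3 p hp1 r hr1 h2
              exact absurd (e.symm.trans hR) (hxne r (Finset.mem_union_right _ hr1)).symm
          rcases Finset.mem_insert.1 hr' with rfl | hrm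
          · rcases Finset.mem_union.1 hpm with hp1 | hp1 <;>
              rcases Finset.mem_union.1 hqm with hq1 | hq1
            · -- p,q ∈ L : recurse
              exact Or.inl ⟨memLs hp1, memLs hq1, memxLs,
                hrealLs p q r (Finset.mem_insert_of_mem hp1) (Finset.mem_insert_of_mem hq1)
                  (Finset.mem_insert_self _ _) h1 h2 h3 hR⟩
            · -- p ∈ L, q ∈ Rt : hC2 p q : apex q ≠ x
              have e : R {p, q, r} = q := hC2 p hp1 q hq1
              exact absurd (e.symm.trans hR) (hxne q (Finset.mem_union_right _ hq1))
            · have e : R {p, q, r} = p := by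
                rw [show ({p, q, r} : Finset V) = {q, p, r} from perm_swap12 p q r]
                exact hC2 q hq1 p hp1
              exact absurd (e.symm.trans hR) (hxne p (Finset.mem_union_right _ hp1))
            · -- p,q ∈ Rt : apex x : d4
              exact Or.inr (Or.inr (Or.inr ⟨hp1, hq1, memxLs⟩))
          · rcases Finset.mem_union.1 hpm with hp1 | hp1 <;>
              rcases Finset.mem_union.1 hqm with hq1 | hq1 <;>
              rcases Finset.mem_union.1 hrm with hr1 | hr1
            · exact Or.inl ⟨memLs hp1, memLs hq1, memLs hr1,
                hrealLs p q r (Finset.mem_insert_of_mem hp1) (Finset.mem_insert_of_mem hq1)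
                  (Finset.mem_insert_of_mem hr1) h1 h2 h3 hR⟩
            · exact Or.inr (Or.inr (Or.inl ⟨memLs hp1, memLs hq1, hr1⟩))
            · exact absurd hR (hK p q r hp1 hq1 (Finset.mem_union_left _ hr1) h1 h2 h3)
            · exact absurd hR (hK p q r hp1 hq1 (Finset.mem_union_right _ hr1) h1 h2 h3)
            · have e : R {q, p, r} = R {p, q, r} := by
                rw [show ({q, p, r} : Finset V) = {p, q, r} from perm_swap12 q p r]
              exact absurd (e.trans hR)
                (hK q p r hq1 hp1 (Finset.mem_union_left _ hr1) h1.symm h3 h2)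
            · have e : R {q, p, r} = R {p, q, r} := by
                rw [show ({q, p, r} : Finset V) = {p, q, r} from perm_swap12 q p r]
              exact absurd (e.trans hR)
                (hK q p r hq1 hp1 (Finset.mem_union_right _ hr1) h1.symm h3 h2)
            · exact Or.inr (Or.inr (Or.inr ⟨hp1, hq1, memLs hr1⟩))
            · exact Or.inr (Or.inl ⟨hp1, hq1, hr1, hrealRt p q r hp1 hq1 hr1 h1 h2 h3 hR⟩)
    · -- R {a₀,b₀,x} = x : put x as sibling of the root
      have hC1 := caseX hval H4 L.leaves Rt.leaves (fun y hy hy' => hD hy hy') hK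
        x hxA hxB ha₀ hb₀ hX
      refine ⟨node (node L Rt) (leaf x), ?_, ?_, ?_⟩
      · rw [Proper, leafList, List.nodup_append]
        refine ⟨hp, by simp [leafList], ?_⟩
        intro y hyl z hyr hyz
        subst hyz
        have : y = x := by simpa [leafList] using hyr
        subst this
        exact hx (mem_leaves_iff.2 hyl)
      · rw [leaves_node, leaves_leaf, hlv, Finset.union_comm _ {x}, ← Finset.insert_eq]
      · rw [hlv]
        intro p q r hp' hq' hr' h1 h2 h3 hR
        rcases Finset.mem_insert.1 hp' with rfl | hpm
        · rcases Finset.mem_insert.1 hq' with rfl | hqm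
          · exact absurd rfl h1
          rcases Finset.mem_insert.1 hr' with rfl | hrm
          · exact absurd rfl h2
          -- p = x : hC1 q r : apex x ≠ r
          have e : R {p, q, r} = p := by
            rw [show ({p, q, r} : Finset V) = {q, r, p} from perm_rot p q r]
            exact hC1 q r hqm hrm h3
          exact absurd (e.symm.trans hR) h2
        · rcases Finset.mem_insert.1 hq' with rfl | hqm
          · rcases Finset.mem_insert.1 hr' with rfl | hrm
            · exact absurd rfl h3
            have e : R {p, q, r} = q := by
              rw [show ({p, q, r} : Finset V) = {p, r, q} from perm_swap23 p q r]
              exact hC1 p r hpm hrm h2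
            exact absurd (e.symm.trans hR) (hxne r hrm).symm
          rcases Finset.mem_insert.1 hr' with rfl | hrm
          · -- r = x : apex x : d3
            refine Or.inr (Or.inr (Or.inl ⟨?_, ?_, by simp⟩)) <;>
              rw [hlv] <;> assumption
          · -- all old : d1
            exact Or.inl ⟨by rw [hlv]; exact hpm, by rw [hlv]; exact hqm, by rw [hlv]; exact hrm,
              hrealU p q r hpm hqm hrm h1 h2 h3 hR⟩

include hval H4 in
lemma buildTree : ∀ (n : ℕ) (S : Finset V), S.card = n → S.Nonempty →
    ∃ T : RTree V, T.Proper ∧ T.leaves = S ∧ Realizes T R S := by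
  intro n
  induction n with
  | zero =>
    intro S h hne
    exact absurd (Finset.card_eq_zero.1 h) (Finset.nonempty_iff_ne_empty.1 hne)
  | succ m ih =>
    intro S hcard hne
    obtain ⟨x, hxS⟩ := hne
    by_cases h1 : (S.erase x).Nonempty
    · obtain ⟨T', hp', hlv', hreal'⟩ := ih (S.erase x)
        (by rw [Finset.card_erase_of_mem hxS, hcard]; rfl) h1
      have hx' : x ∉ T'.leaves := by rw [hlv']; exact Finset.notMem_erase x S
      obtain ⟨T, hpT, hlvT, hrealT⟩ := insert_leaf hval H4 x T' hp' hx' (hlv' ▸ hreal')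
      have hS : insert x T'.leaves = S := by rw [hlv']; exact Finset.insert_erase hxS
      exact ⟨T, hpT, by rw [hlvT, hS], by rw [← hS]; exact hrealT⟩
    · have hS : S = {x} := by
        rcases (Finset.erase_eq_empty_iff S x).1 (Finset.not_nonempty_iff_eq_empty.1 h1) with h | h
        · exact absurd h (Finset.nonempty_iff_ne_empty.1 ⟨x, hxS⟩)
        · exact h
      subst hS
      refine ⟨RTree.leaf x, by simp [RTree.Proper, RTree.leafList], rfl, ?_⟩
      intro p q r hp' hq' hr' hpq _ _ _
      exact absurd ((Finset.mem_singleton.1 hp').trans (Finset.mem_singleton.1 hq').symm) hpq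

end Core

end TripletAux

/-- A dense set of rooted triplets over `V` is consistent if and only if it
contains no conflict on four leaves. -/
theorem triplet_consistent_iff_no_conflict4 [Fintype V] [Nonempty V]
    (R : Finset V → V) (hval : TripletValid R Finset.univ) :
    TripletConsistentOn R Finset.univ ↔
      ∀ C : Finset V, C.card = 4 → TripletConsistentOn R C := by
  constructor
  · rintro ⟨T, hpT, hlvT, hrealT⟩ C hC
    have hCne : C.Nonempty := Finset.card_pos.1 (by rw [hC]; norm_num)
    obtain ⟨y, hy⟩ := hCne
    have hyT : y ∈ T.leaves := by rw [hlvT]; exact Finset.mem_univ y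
    obtain ⟨T', hT', _⟩ := RTree.mem_restrictO hyT hy
    refine ⟨T', RTree.proper_of_restrictO hT' hpT, ?_, ?_⟩
    · rw [RTree.leaves_of_restrictO hT', hlvT, Finset.univ_inter]
    · intro p q r hp' hq' hr' h1 h2 h3 hR
      have := hrealT p q r (Finset.mem_univ p) (Finset.mem_univ q) (Finset.mem_univ r)
        h1 h2 h3 hR
      exact RTree.consistent_restrictO this hp' hq' hr' T' hT'
  · intro H4
    exact buildTree hval H4 Finset.univ.card Finset.univ rfl Finset.univ_nonempty
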